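/- Let G(x) = diag(G_1(x),...,G_t(x)) be a block-diagonal symmetric polynomial matrix with G_i(x) a q_i × q_i symmetric matrix whose entries are affine (degree ≤ 1) polynomials in ℝ[x_1,...,x_n], and set q = q_1 + ... + q_t. Let H(G) ⊆ ℝ[x_1,...,x_n] be the set of all polynomials of the form λ_0 + Σ_{k=1}^m ⟨Λ_k, G(x)^{⊗k}⟩ where m ∈ ℕ, λ_0 ≥ 0 is real, and each Λ_k is a q^k × q^k positive semidefinite real matrix. For a word w = (w_1,...,w_k) ∈ {1,...,t}^k, let w(G(x)) = G_{w_1}(x) ⊗ G_{w_2}(x) ⊗ ... ⊗ G_{w_k}(x), a square polynomial matrix of size d(w) = q_{w_1}·q_{w_2}···q_{w_k}. Then H(G) equals the set of all polynomials of the form λ_0 + Σ_{w} ⟨Γ_w, w(G(x))⟩, the sum running over all words w of length between 1 and m in the letters {1,...,t}, where m ∈ ℕ, λ_0 ≥ 0 is real, and each Γ_w is a d(w) × d(w) positive semidefinite real matrix. -/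

import Mathlib

open scoped BigOperators
open Matrix

noncomputable section

/-- The `k`-fold Kronecker power of a matrix, with rows and columns indexed by
functions `Fin k → ι` (a type of cardinality `(#ι)^k`):
`(M^{⊗k})_{a,b} = ∏ᵢ M_{a i, b i}`. -/
def kronPow {ι : Type*} {R : Type*} [CommMonoid R] (M : Matrix ι ι R) (k : ℕ) :
    Matrix (Fin k → ι) (Fin k → ι) R :=
  Matrix.of fun a b => ∏ i, M (a i) (b i)

/-- Trace inner product `⟨Λ, B⟩ = tr(Λᵀ B) = ∑ᵢⱼ Λᵢⱼ Bᵢⱼ` of a real matrix against a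
polynomial matrix. -/
def tipP {n : ℕ} {ι : Type*} [Fintype ι] (Λ : Matrix ι ι ℝ)
    (B : Matrix ι ι (MvPolynomial (Fin n) ℝ)) : MvPolynomial (Fin n) ℝ :=
  ∑ i, ∑ j, MvPolynomial.C (Λ i j) * B i j

/-- The cone `H(G)` of all polynomials of the form
`λ₀ + ∑_{k=1}^m ⟨Λ_k, G(x)^{⊗k}⟩` with `λ₀ ≥ 0` and each `Λ_k` positive semidefinite. -/
def Hset {n : ℕ} {ι : Type*} [Fintype ι]
    (G : Matrix ι ι (MvPolynomial (Fin n) ℝ)) : Set (MvPolynomial (Fin n) ℝ) :=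
  { p | ∃ (m : ℕ) (lam0 : ℝ) (Λ : (k : ℕ) → Matrix (Fin k → ι) (Fin k → ι) ℝ),
      0 ≤ lam0 ∧ (∀ k ∈ Finset.Icc 1 m, (Λ k).PosSemidef) ∧
      p = MvPolynomial.C lam0 + ∑ k ∈ Finset.Icc 1 m, tipP (Λ k) (kronPow G k) }

/-- For a word `w = (w₁,…,w_k)` in the letters `{1,…,t}`, the evaluation
`w(G) = G_{w₁} ⊗ ⋯ ⊗ G_{w_k}`, a square matrix of size `q_{w₁}⋯q_{w_k}` indexed by the
dependent functions `(i : Fin k) → Fin (q (w i))`. -/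
def wordMat {n t : ℕ} {q : Fin t → ℕ}
    (G : (i : Fin t) → Matrix (Fin (q i)) (Fin (q i)) (MvPolynomial (Fin n) ℝ))
    {k : ℕ} (w : Fin k → Fin t) :
    Matrix ((i : Fin k) → Fin (q (w i))) ((i : Fin k) → Fin (q (w i)))
      (MvPolynomial (Fin n) ℝ) :=
  Matrix.of fun a b => ∏ i, G (w i) (a i) (b i)

-- auxiliary
variable {n t : ℕ} {q : Fin t → ℕ}

def emb {k : ℕ} (w : Fin k → Fin t) :
    ((i : Fin k) → Fin (q (w i))) → (Fin k → (i : Fin t) × Fin (q i)) :=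
  fun a i => ⟨w i, a i⟩

def sigE (q : Fin t → ℕ) (k : ℕ) :
    (Fin k → (i : Fin t) × Fin (q i)) ≃ ((w : Fin k → Fin t) × ((i : Fin k) → Fin (q (w i)))) where
  toFun a := ⟨fun i => (a i).1, fun i => (a i).2⟩
  invFun p i := ⟨p.1 i, p.2 i⟩
  left_inv a := rfl
  right_inv p := rfl

lemma reidx {M : Type*} [AddCommMonoid M] (k : ℕ)
    (F : (Fin k → (i : Fin t) × Fin (q i)) → M) :
    ∑ a, F a = ∑ w : Fin k → Fin t, ∑ a' : (i : Fin k) → Fin (q (w i)), F (emb w a') := by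
  rw [← (sigE q k).symm.sum_comp F, ← Finset.univ_sigma_univ, Finset.sum_sigma]
  rfl

lemma tipP_kronPow_blockDiagonal'
    (G : (i : Fin t) → Matrix (Fin (q i)) (Fin (q i)) (MvPolynomial (Fin n) ℝ))
    {k : ℕ}
    (Λ : Matrix (Fin k → (i : Fin t) × Fin (q i)) (Fin k → (i : Fin t) × Fin (q i)) ℝ) :
    tipP Λ (kronPow (Matrix.blockDiagonal' G) k)
      = ∑ w : Fin k → Fin t, tipP (Λ.submatrix (emb w) (emb w)) (wordMat G w) := by
  unfold tipP
  rw [reidx k]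
  refine Finset.sum_congr rfl fun wa _ => ?_
  refine Finset.sum_congr rfl fun a' _ => ?_
  rw [reidx k]
  rw [Finset.sum_eq_single wa]
  · refine Finset.sum_congr rfl fun b' _ => ?_
    congr 1
    show (∏ i, Matrix.blockDiagonal' G (⟨wa i, a' i⟩ : (i : Fin t) × Fin (q i)) ⟨wa i, b' i⟩)
        = ∏ i, G (wa i) (a' i) (b' i)
    exact Finset.prod_congr rfl fun i _ =>
      Matrix.blockDiagonal'_apply_eq G (wa i) (a' i) (b' i)
  · intro wb _ hne
    obtain ⟨i, hi⟩ := Function.ne_iff.mp hne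
    refine Finset.sum_eq_zero fun b' _ => ?_
    have : (∏ i, Matrix.blockDiagonal' G ((emb wa a') i) ((emb wb b') i)) = 0 :=
      Finset.prod_eq_zero (Finset.mem_univ i)
        (Matrix.blockDiagonal'_apply_ne G (a' i) (b' i) (Ne.symm hi))
    show MvPolynomial.C (Λ (emb wa a') (emb wb b')) *
        kronPow (Matrix.blockDiagonal' G) k (emb wa a') (emb wb b') = 0
    rw [show kronPow (Matrix.blockDiagonal' G) k (emb wa a') (emb wb b')
        = ∏ i, Matrix.blockDiagonal' G ((emb wa a') i) ((emb wb b') i) from rfl, this, mul_zero]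
  · intro h; exact absurd (Finset.mem_univ wa) h

lemma posSemidef_blockDiagonal' {ι : Type*} [Fintype ι] [DecidableEq ι]
    {m : ι → Type*} [∀ i, Fintype (m i)] [∀ i, DecidableEq (m i)]
    (M : ∀ i, Matrix (m i) (m i) ℝ) (h : ∀ i, (M i).PosSemidef) :
    (Matrix.blockDiagonal' M).PosSemidef := by
  rw [Matrix.posSemidef_iff_dotProduct_mulVec]
  constructor
  · show (Matrix.blockDiagonal' M)ᴴ = Matrix.blockDiagonal' M
    rw [Matrix.blockDiagonal'_conjTranspose]
    exact congrArg _ (funext fun i => (h i).1)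
  · intro x
    have key : star x ⬝ᵥ (Matrix.blockDiagonal' M) *ᵥ x
        = ∑ i, star (fun a => x ⟨i, a⟩) ⬝ᵥ (M i) *ᵥ (fun a => x ⟨i, a⟩) := by
      rw [dotProduct, ← Finset.univ_sigma_univ, Finset.sum_sigma]
      refine Finset.sum_congr rfl fun i _ => ?_
      rw [dotProduct]
      refine Finset.sum_congr rfl fun a _ => ?_
      congr 1
      rw [Matrix.mulVec, dotProduct, Matrix.mulVec, dotProduct,
        ← Finset.univ_sigma_univ, Finset.sum_sigma]
      rw [Finset.sum_eq_single i]
      · exact Finset.sum_congr rfl fun b _ => by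
          rw [Matrix.blockDiagonal'_apply_eq]
      · intro j _ hj
        refine Finset.sum_eq_zero fun b _ => ?_
        rw [Matrix.blockDiagonal'_apply_ne M a b hj.symm, zero_mul]
      · intro hh; exact absurd (Finset.mem_univ i) hh
    rw [key]
    exact Finset.sum_nonneg fun i _ => (h i).dotProduct_mulVec_nonneg _


/-- For a block-diagonal linear polynomial matrix `G = diag(G₁,…,G_t)` (each `G_i` of
size `q_i` with affine entries, and `q = q₁ + ⋯ + q_t` realized by the sigma type
`Σ i, Fin (q i)`), the cone `H(G)` coincides with the set of polynomials
`λ₀ + ∑_w ⟨Γ_w, w(G(x))⟩`, the sum running over all words `w` of length `1,…,m`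
in the letters `{1,…,t}`, with `λ₀ ≥ 0` and each `Γ_w` positive semidefinite of size
`d(w) = q_{w₁}⋯q_{w_k}`. -/
theorem Hset_blockDiagonal_words {n t : ℕ} {q : Fin t → ℕ}
    (G : (i : Fin t) → Matrix (Fin (q i)) (Fin (q i)) (MvPolynomial (Fin n) ℝ))
    (hsym : ∀ i, (G i).IsSymm)
    (haff : ∀ i a b, ((G i) a b).totalDegree ≤ 1) :
    Hset (Matrix.blockDiagonal' G) =
      { p | ∃ (m : ℕ) (lam0 : ℝ)
          (Γ : (k : ℕ) → (w : Fin k → Fin t) →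
            Matrix ((i : Fin k) → Fin (q (w i))) ((i : Fin k) → Fin (q (w i))) ℝ),
          0 ≤ lam0 ∧
          (∀ (k : ℕ), k ∈ Finset.Icc 1 m → ∀ w : Fin k → Fin t, (Γ k w).PosSemidef) ∧
          p = MvPolynomial.C lam0 +
            ∑ k ∈ Finset.Icc 1 m, ∑ w : Fin k → Fin t, tipP (Γ k w) (wordMat G w) } := by
  ext p
  constructor
  · rintro ⟨m, lam0, Λ, h0, hpsd, hp⟩
    refine ⟨m, lam0, fun k w => (Λ k).submatrix (emb w) (emb w), h0,
      fun k hk w => (hpsd k hk).submatrix _, ?_⟩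
    rw [hp]
    congr 1
    exact Finset.sum_congr rfl fun k _ => tipP_kronPow_blockDiagonal' G (Λ k)
  · rintro ⟨m, lam0, Γ, h0, hpsd, hp⟩
    refine ⟨m, lam0,
      fun k => (Matrix.blockDiagonal' (Γ k)).submatrix (sigE q k) (sigE q k), h0,
      fun k hk => (posSemidef_blockDiagonal' _ (hpsd k hk)).submatrix _, ?_⟩
    rw [hp]
    congr 1
    refine Finset.sum_congr rfl fun k _ => ?_
    rw [tipP_kronPow_blockDiagonal']
    refine Finset.sum_congr rfl fun w _ => ?_
    congr 1
    ext a b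
    exact (Matrix.blockDiagonal'_apply_eq (Γ k) w a b).symm

end
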